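/- arXiv:2106.05928 — 6 statements merged into one kernel-verified Lean document; each statement's English description precedes it below -/
import Mathlib

section
/- Let G be a graph with chromatic number χ(G) = k. Then for every t ∈ {0,…,k} and every signature σ of G: χ^t_sym(G,σ) ≤ 2k − t. Furthermore, for the signed expansion ±G one has χ^t_sym(±G) = 2k − t, and there exist simple signed graphs (H,σ_H) with χ(H) = k and χ^t_sym(H,σ_H) = 2k − t. -/
/-!
Common framework for symmetric-set colorings of signed graphs
(C. Cappello, E. Steffen, "Symmetric set coloring of signed graphs").

* A signed graph is a `SimpleGraph V` together with a signature
  `σ : Sym2 V → Bool` (`true` = positive edge, `false` = negative edge);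
  only the values of `σ` on edges of `G` matter.
* The canonical symmetric set `S_{2k}^t` with `t` self-inverse elements and
  `k` pairs of non-self-inverse elements is `Sym t k := Fin t ⊕ Fin k × Bool`,
  with negation `symNeg` fixing the `Fin t` part and swapping the Boolean.
-/

namespace SymSet

/-- The canonical symmetric set `S_{2k}^t`. -/
abbrev Sym (t k : ℕ) := Fin t ⊕ Fin k × Bool

/-- Negation on the symmetric set: self-inverse elements are fixed,
the two elements of each pair are exchanged. -/
def symNeg {t k : ℕ} : Sym t k → Sym t k
  | .inl i => .inl i
  | .inr (i, b) => .inr (i, !b)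

/-- Action of a sign on a color: a positive sign acts trivially,
a negative sign acts by negation. -/
def signAct {t k : ℕ} (s : Bool) (x : Sym t k) : Sym t k :=
  if s then x else symNeg x

variable {V : Type*}

/-- A proper `S_{2k}^t`-coloring of the signed graph `(G, σ)`:
`c v ≠ σ(e) · c w` for every edge `e = vw`. -/
def IsProperColoring (G : SimpleGraph V) (σ : Sym2 V → Bool) {t k : ℕ}
    (c : V → Sym t k) : Prop :=
  ∀ ⦃v w : V⦄, G.Adj v w → c v ≠ signAct (σ s(v, w)) (c w)

/-- `(G, σ)` admits a proper `S_{2k}^t`-coloring. -/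
def SymColorable (G : SimpleGraph V) (σ : Sym2 V → Bool) (t k : ℕ) : Prop :=
  ∃ c : V → Sym t k, IsProperColoring G σ c

/-- The symset `t`-chromatic number `χ^t_sym(G, σ)`: the least `t + 2k`
such that `(G, σ)` admits a proper `S_{2k}^t`-coloring. -/
noncomputable def symChromT (G : SimpleGraph V) (σ : Sym2 V → Bool) (t : ℕ) : ℕ :=
  sInf {n | ∃ k, n = t + 2 * k ∧ SymColorable G σ t k}

/-- The chromatic number of the underlying graph, as a natural number. -/
noncomputable def chrom (G : SimpleGraph V) : ℕ := G.chromaticNumber.toNat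

/-- The symset chromatic number `χ_sym(G, σ)`: the minimum of
`χ^t_sym(G, σ)` over `0 ≤ t ≤ χ(G)`. -/
noncomputable def symChrom (G : SimpleGraph V) (σ : Sym2 V → Bool) : ℕ :=
  sInf {n | ∃ t ≤ chrom G, n = symChromT G σ t}

/-- Switching a signature at the vertex set `X = {v | X v = true}`:
the sign of every edge with exactly one end in `X` is reversed. -/
def switch (X : V → Bool) (σ : Sym2 V → Bool) : Sym2 V → Bool :=
  fun e =>
    xor (Sym2.lift ⟨fun u v => xor (X u) (X v), fun u v => by simp [Bool.xor_comm]⟩ e) (σ e)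

/-- Two signatures of `G` are equivalent if one is obtained from the other by a
switching (equality of signs is only required on the edges of `G`). -/
def Equivalent (G : SimpleGraph V) (σ σ' : Sym2 V → Bool) : Prop :=
  ∃ X : V → Bool, ∀ e ∈ G.edgeSet, σ' e = switch X σ e

/-- The number of negative edges of a closed walk. -/
def negCount (σ : Sym2 V → Bool) {G : SimpleGraph V} {u : V} (w : G.Walk u u) : ℕ :=
  (w.edges.filter (fun e => !σ e)).length

/-- `(G, σ)` is balanced: every circuit has sign `+1`,
i.e. an even number of negative edges. -/
def Balanced (G : SimpleGraph V) (σ : Sym2 V → Bool) : Prop :=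
  ∀ ⦃u : V⦄ (w : G.Walk u u), w.IsCycle → Even (negCount σ w)

/-- `(G, σ)` is antibalanced: every even circuit has sign `+1` and every odd
circuit has sign `-1`. -/
def Antibalanced (G : SimpleGraph V) (σ : Sym2 V → Bool) : Prop :=
  ∀ ⦃u : V⦄ (w : G.Walk u u), w.IsCycle → (Even w.length ↔ Even (negCount σ w))

/-- Restriction of a signature to (the induced subgraph on) a vertex subset. -/
def restrict (σ : Sym2 V → Bool) (s : Set V) : Sym2 s → Bool :=
  fun e => σ (Sym2.map Subtype.val e)

/-- A circuit: a connected 2-regular graph. -/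
def IsCircuit (G : SimpleGraph V) [Fintype V] [DecidableRel G.Adj] : Prop :=
  G.Connected ∧ G.IsRegularOfDegree 2

/-- The frustration index `l(G, σ)`: the least number of edges whose deletion
makes the signed graph balanced. -/
noncomputable def frustrationIndex (G : SimpleGraph V) (σ : Sym2 V → Bool) : ℕ :=
  sInf {n | ∃ F : Finset (Sym2 V), F.card = n ∧ Balanced (G.deleteEdges ↑F) σ}

/-- A proper coloring of the signed expansion `±G` (each edge of `G` replaced by
a positive and a negative parallel edge): for each edge `vw` of `G`,
`c v ∉ {c w, -c w}`. -/
def IsProperExpColoring (G : SimpleGraph V) {t k : ℕ} (c : V → Sym t k) : Prop :=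
  ∀ ⦃v w : V⦄, G.Adj v w → c v ≠ c w ∧ c v ≠ symNeg (c w)

/-- The symset `t`-chromatic number of the signed expansion `±G`. -/
noncomputable def expSymChromT (G : SimpleGraph V) (t : ℕ) : ℕ :=
  sInf {n | ∃ k, n = t + 2 * k ∧ ∃ c : V → Sym t k, IsProperExpColoring G c}

end SymSet


namespace SymSet

variable {V : Type*}

/-! ### Auxiliary material for the proof of Statement 4 -/

/-- From a proper `k`-coloring and `t ≤ k`, the standard `S_{2(k-t)}^t`-coloring:
the first `t` colors become self-inverse colors, the rest become the `true`
elements of the pairs.  Adjacent vertices get colors that are neither equal nor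
opposite. -/
lemma exists_std_coloring {t k : ℕ} (ht : t ≤ k) (G : SimpleGraph V)
    (C : G.Coloring (Fin k)) :
    ∃ c : V → Sym t (k - t), ∀ ⦃v w⦄, G.Adj v w → c v ≠ c w ∧ c v ≠ symNeg (c w) := by
  refine ⟨fun v => if h : (C v : ℕ) < t then Sum.inl ⟨C v, h⟩ else
    Sum.inr (⟨(C v : ℕ) - t, by omega⟩, true), fun v w hadj => ?_⟩
  have hne : C v ≠ C w := C.valid hadj
  have hne' : (C v : ℕ) ≠ (C w : ℕ) := fun h => hne (Fin.val_injective h)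
  by_cases h1 : (C v : ℕ) < t <;> by_cases h2 : (C w : ℕ) < t <;>
    simp only [dif_pos, dif_neg, h1, h2, dite_true, dite_false, symNeg] <;>
    constructor <;> intro h <;> simp_all <;> omega

/-- A coloring avoiding equal and opposite colors on edges is a proper coloring
for every signature. -/
lemma isProperColoring_of_std {t k : ℕ} {G : SimpleGraph V} {c : V → Sym t k}
    (hstd : ∀ ⦃v w⦄, G.Adj v w → c v ≠ c w ∧ c v ≠ symNeg (c w))
    (σ : Sym2 V → Bool) : IsProperColoring G σ c := by
  intro v w hadj
  obtain ⟨h1, h2⟩ := hstd hadj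
  cases hσ : σ s(v, w)
  · simpa [signAct, hσ] using h2
  · simpa [signAct, hσ] using h1

/-- The signature function on the product `Fin k × Fin k`: for parts `i < j`,
the edge from `(i,a)` to `(j,b)` is positive iff `a ≤ b`. -/
def sgnP (k : ℕ) (u v : Fin k × Fin k) : Bool :=
  if u.1 < v.1 then decide (u.2 ≤ v.2) else if v.1 < u.1 then decide (v.2 ≤ u.2) else true

lemma sgnP_symm (k : ℕ) (u v : Fin k × Fin k) : sgnP k u v = sgnP k v u := by
  unfold sgnP
  rcases lt_trichotomy u.1 v.1 with h | h | h
  · rw [if_pos h, if_neg (lt_asymm h), if_pos h]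
  · have h1 : ¬ u.1 < v.1 := by rw [h]; exact lt_irrefl _
    have h2 : ¬ v.1 < u.1 := by rw [h]; exact lt_irrefl _
    rw [if_neg h1, if_neg h2, if_neg h2, if_neg h1]
  · rw [if_neg (lt_asymm h), if_pos h, if_pos h]

/-- The complete `k`-partite graph on `Fin (k*k)`, parts given by the first
coordinate under `finProdFinEquiv.symm`. -/
def HHgraph (k : ℕ) : SimpleGraph (Fin (k * k)) where
  Adj u v := (finProdFinEquiv.symm u).1 ≠ (finProdFinEquiv.symm v).1
  symm := ⟨fun _ _ h => Ne.symm h⟩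
  loopless := ⟨fun _ h => h rfl⟩

/-- Its signature. -/
def sigH (k : ℕ) : Sym2 (Fin (k * k)) → Bool :=
  Sym2.lift ⟨fun u v => sgnP k (finProdFinEquiv.symm u) (finProdFinEquiv.symm v),
    fun _ _ => sgnP_symm k _ _⟩

/-- Circular difference `(x - y) mod 2k` for `x, y < 2k`. -/
def circD (k x y : ℕ) : ℕ := if y ≤ x then x - y else x + 2*k - y

lemma circD_lt {k x y : ℕ} (hx : x < 2*k) : circD k x y < 2*k := by
  unfold circD; split_ifs <;> omega

lemma circD_inj {k x y z : ℕ} (hx : x < 2*k) (hy : y < 2*k) (hz : z < 2*k)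
    (h : circD k x z = circD k y z) : x = y := by
  unfold circD at h; split_ifs at h <;> omega

lemma circD_add {k a b c : ℕ} (ha : a < 2*k) (hb : b < 2*k) (hc : c < 2*k) :
    circD k a c = if circD k a b + circD k b c < 2*k then circD k a b + circD k b c
      else circD k a b + circD k b c - 2*k := by
  unfold circD; split_ifs <;> omega

/-- Core counting lemma: a set of points of `Fin k × Fin k` (part, position)
with circular values `F`, such that the value of any point of an earlier part
lies in the half-open half-circle `(F v, F v + k]` after any point `v` of a
later part, has at most `k + 1` elements. -/
lemma core_count {k : ℕ} (T : Finset (Fin k × Fin k)) (F : Fin k × Fin k → ℕ)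
    (hF : ∀ v ∈ T, F v < 2*k)
    (hinj : ∀ u ∈ T, ∀ v ∈ T, u.1 = v.1 → F u = F v → u = v)
    (hcross : ∀ u ∈ T, ∀ v ∈ T, u.1 < v.1 →
      1 ≤ circD k (F u) (F v) ∧ circD k (F u) (F v) ≤ k) :
    T.card ≤ k + 1 := by
  rcases T.eq_empty_or_nonempty with rfl | hTne
  · simp
  classical
  have hPne : (T.image Prod.fst).Nonempty := hTne.image _
  have hi0le : ∀ v ∈ T, (T.image Prod.fst).min' hPne ≤ v.1 := fun v hv =>
    Finset.min'_le _ _ (Finset.mem_image_of_mem _ hv)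
  set i0 := (T.image Prod.fst).min' hPne with hi0def
  set A : Finset (Fin k × Fin k) := T.filter (fun v => v.1 = i0) with hA
  set B : Finset (Fin k × Fin k) := T.filter (fun v => ¬ v.1 = i0) with hB
  have hcard : A.card + B.card = T.card := Finset.card_filter_add_card_filter_not _
  have hAsub : A ⊆ T := Finset.filter_subset _ _
  have hBsub : B ⊆ T := Finset.filter_subset _ _
  have hAne : A.Nonempty := by
    obtain ⟨v, hv, hv1⟩ := Finset.mem_image.1 ((T.image Prod.fst).min'_mem hPne)
    exact ⟨v, Finset.mem_filter.2 ⟨hv, hv1⟩⟩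
  have hBlt : ∀ z ∈ B, i0 < z.1 := by
    intro z hz
    have := Finset.mem_filter.1 hz
    exact lt_of_le_of_ne (hi0le z this.1) (Ne.symm this.2)
  have hAcard' : A.card ≤ k := by
    have : A.card ≤ (Finset.univ : Finset (Fin k)).card := by
      apply Finset.card_le_card_of_injOn (fun v => v.2) (fun _ _ => Finset.mem_univ _)
      intro u hu v hv h2
      exact Prod.ext ((Finset.mem_filter.1 hu).2.trans (Finset.mem_filter.1 hv).2.symm) h2
    simpa using this
  rcases B.eq_empty_or_nonempty with hBe | hBne
  · have : B.card = 0 := by rw [hBe]; rfl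
    omega
  obtain ⟨y, hyB, hy1⟩ := Finset.mem_image.1
    (Finset.max'_mem (B.image Prod.fst) (hBne.image _))
  have hyT : y ∈ T := hBsub hyB
  have hyi0 : i0 < y.1 := hBlt y hyB
  obtain ⟨um, humA, hum⟩ := Finset.mem_image.1
    (Finset.min'_mem (A.image (fun u => circD k (F u) (F y))) (hAne.image _))
  obtain ⟨uM, huMA, huM⟩ := Finset.mem_image.1
    (Finset.max'_mem (A.image (fun u => circD k (F u) (F y))) (hAne.image _))
  have humT : um ∈ T := hAsub humA
  have huMT : uM ∈ T := hAsub huMA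
  have hmle : ∀ u ∈ A, circD k (F um) (F y) ≤ circD k (F u) (F y) := by
    intro u hu
    exact le_trans (le_of_eq hum)
      (Finset.min'_le _ _ (Finset.mem_image_of_mem (fun u => circD k (F u) (F y)) hu))
  have hMge : ∀ u ∈ A, circD k (F u) (F y) ≤ circD k (F uM) (F y) := by
    intro u hu
    exact le_trans (Finset.le_max' _ _
      (Finset.mem_image_of_mem (fun u => circD k (F u) (F y)) hu)) (le_of_eq huM.symm)
  have humi0 : um.1 = i0 := (Finset.mem_filter.1 humA).2
  have huMi0 : uM.1 = i0 := (Finset.mem_filter.1 huMA).2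
  have hm1 : 1 ≤ circD k (F um) (F y) := (hcross um humT y hyT (humi0 ▸ hyi0)).1
  have hMk : circD k (F uM) (F y) ≤ k := (hcross uM huMT y hyT (huMi0 ▸ hyi0)).2
  have hmM : circD k (F um) (F y) ≤ circD k (F uM) (F y) := hmle uM huMA
  have hAcard : A.card ≤ circD k (F uM) (F y) + 1 - circD k (F um) (F y) := by
    have : A.card ≤ (Finset.Icc (circD k (F um) (F y)) (circD k (F uM) (F y))).card := by
      apply Finset.card_le_card_of_injOn (fun u => circD k (F u) (F y))
      · exact fun u hu => Finset.mem_Icc.2 ⟨hmle u hu, hMge u hu⟩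
      · intro u hu v hv h
        exact hinj u (hAsub hu) v (hAsub hv)
          ((Finset.mem_filter.1 hu).2.trans (Finset.mem_filter.1 hv).2.symm)
          (circD_inj (hF u (hAsub hu)) (hF v (hAsub hv)) (hF y hyT) h)
    simpa [Nat.card_Icc] using this
  have hzR : ∀ z ∈ B, circD k (F z) (F y) < circD k (F um) (F y) ∨
      circD k (F uM) (F y) + k ≤ circD k (F z) (F y) := by
    intro z hz
    have hzT := hBsub hz
    have h1 := hcross um humT z hzT (humi0 ▸ hBlt z hz)
    have h2 := hcross uM huMT z hzT (huMi0 ▸ hBlt z hz)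
    have e1 := circD_add (hF um humT) (hF z hzT) (hF y hyT)
    have e2 := circD_add (hF uM huMT) (hF z hzT) (hF y hyT)
    have hzlt := circD_lt (k := k) (y := F y) (hF z hzT)
    split_ifs at e1 e2 <;> omega
  have hBcard : B.card ≤ k - (circD k (F uM) (F y) - circD k (F um) (F y)) := by
    have : B.card ≤ (Finset.range
        (k - (circD k (F uM) (F y) - circD k (F um) (F y)))).card := by
      apply Finset.card_le_card_of_injOn (fun z =>
        if circD k (F z) (F y) < circD k (F um) (F y)
        then circD k (F z) (F y) + k - circD k (F uM) (F y)
        else circD k (F z) (F y) - (circD k (F uM) (F y) + k))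
      · intro z hz
        have := hzR z hz
        have hzlt := circD_lt (k := k) (y := F y) (hF z (hBsub hz))
        refine Finset.mem_range.2 ?_
        dsimp only
        split_ifs <;> omega
      · intro z hzb w hwb hzw0
        have hzw : (if circD k (F z) (F y) < circD k (F um) (F y)
            then circD k (F z) (F y) + k - circD k (F uM) (F y)
            else circD k (F z) (F y) - (circD k (F uM) (F y) + k)) =
            (if circD k (F w) (F y) < circD k (F um) (F y)
            then circD k (F w) (F y) + k - circD k (F uM) (F y)
            else circD k (F w) (F y) - (circD k (F uM) (F y) + k)) := hzw0
        clear hzw0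
        have hzT := hBsub hzb; have hwT := hBsub hwb
        have hz := hzR z hzb; have hw := hzR w hwb
        have hzlt := circD_lt (k := k) (y := F y) (hF z hzT)
        have hwlt := circD_lt (k := k) (y := F y) (hF w hwT)
        rcases lt_trichotomy z.1 w.1 with hc | hc | hc
        · exfalso
          have h1 := hcross z hzT w hwT hc
          have e1 := circD_add (hF z hzT) (hF w hwT) (hF y hyT)
          split_ifs at e1 hzw <;> omega
        · have : circD k (F z) (F y) = circD k (F w) (F y) := by
            split_ifs at hzw <;> omega
          exact hinj z hzT w hwT hc
            (circD_inj (hF z hzT) (hF w hwT) (hF y hyT) this)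
        · exfalso
          have h1 := hcross w hwT z hzT hc
          have e1 := circD_add (hF w hwT) (hF z hzT) (hF y hyT)
          split_ifs at e1 hzw <;> omega
    simpa using this
  omega

/-- The boolean part of a color (junk value on self-inverse colors). -/
def bOf {t k : ℕ} : Sym t k → Bool
  | .inl _ => true
  | .inr (_, b) => b

lemma circD_bool {k a b : ℕ} (ha : a < k) (hb : b < k) (bu bv : Bool)
    (hiff : (a ≤ b) ↔ bu ≠ bv) :
    1 ≤ circD k (a + if bu then k else 0) (b + if bv then k else 0) ∧
      circD k (a + if bu then k else 0) (b + if bv then k else 0) ≤ k := by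
  unfold circD
  rcases bu <;> rcases bv <;> simp at hiff <;> split_ifs <;>
    first
      | contradiction
      | (exfalso; exact absurd rfl (by assumption))
      | omega

/-- The key lower bound: the signed graph `(HHgraph k, sigH k)` admits no
proper `S_{2k'}^t`-coloring when `t + k' < k`. -/
lemma HH_no_coloring {k t k' : ℕ} (h : t + k' + 1 ≤ k) :
    ¬ SymColorable (HHgraph k) (sigH k) t k' := by
  rintro ⟨c, hc⟩
  classical
  set ρ : Fin k × Fin k ≃ Fin (k * k) := finProdFinEquiv with hρ
  set ω : Fin (k * k) → Fin t ⊕ Fin k' := fun v => Sum.map id Prod.fst (c v) with hω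
  have hsum : (Finset.univ : Finset (Fin (k * k))).card
      = ∑ o : Fin t ⊕ Fin k', ((Finset.univ : Finset (Fin (k*k))).filter
          (fun v => ω v = o)).card :=
    Finset.card_eq_sum_card_fiberwise (fun x _ => Finset.mem_univ _)
  have hcol : ∀ (v : Fin (k*k)) (o : Fin t), ω v = Sum.inl o → c v = Sum.inl o := by
    intro v o hv
    rcases hcv : c v with a | ⟨a, b⟩ <;> rw [hω] at hv <;> simp [hcv] at hv <;> simp [hv]
  have hcolr : ∀ (v : Fin (k*k)) (o : Fin k'), ω v = Sum.inr o →
      ∃ b, c v = Sum.inr (o, b) := by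
    intro v o hv
    rcases hcv : c v with a | ⟨a, b⟩ <;> rw [hω] at hv <;> simp [hcv] at hv
    exact ⟨b, by rw [hv]⟩
  have hfib1 : ∀ o : Fin t,
      ((Finset.univ : Finset (Fin (k*k))).filter (fun v => ω v = Sum.inl o)).card ≤ k := by
    intro o
    have : ((Finset.univ : Finset (Fin (k*k))).filter (fun v => ω v = Sum.inl o)).card
        ≤ (Finset.univ : Finset (Fin k)).card := by
      apply Finset.card_le_card_of_injOn (fun v => (ρ.symm v).2) (fun _ _ => Finset.mem_univ _)
      intro u hu v hv h2
      have hu' := hcol u o (Finset.mem_filter.1 hu).2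
      have hv' := hcol v o (Finset.mem_filter.1 hv).2
      by_contra hne
      have hadj : (HHgraph k).Adj u v := fun h1 =>
        hne (ρ.symm.injective (Prod.ext h1 h2))
      have hχ := hc hadj
      rw [hu', hv'] at hχ
      rcases hs : sigH k s(u, v) <;> rw [hs] at hχ <;>
        simp [signAct, symNeg] at hχ
    simpa using this
  have hfib2 : ∀ o : Fin k',
      ((Finset.univ : Finset (Fin (k*k))).filter (fun v => ω v = Sum.inr o)).card ≤ k + 1 := by
    intro o
    set Tv := (Finset.univ : Finset (Fin (k*k))).filter (fun v => ω v = Sum.inr o) with hTv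
    have hcTv : Tv.card = (Tv.image ρ.symm).card :=
      (Finset.card_image_of_injective _ ρ.symm.injective).symm
    rw [hcTv]
    apply core_count (F := fun p => ((p.2 : ℕ) + if bOf (c (ρ p)) then k else 0))
    · intro p _
      have := p.2.isLt
      split_ifs <;> omega
    · intro p _ q _ h1 h2
      have := p.2.isLt; have := q.2.isLt
      have : (p.2 : ℕ) = (q.2 : ℕ) := by split_ifs at h2 <;> omega
      exact Prod.ext h1 (Fin.val_injective this)
    · intro p hp q hq hlt
      obtain ⟨u, hu, hup⟩ := Finset.mem_image.1 hp
      obtain ⟨v, hv, hvq⟩ := Finset.mem_image.1 hq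
      obtain ⟨bu, hbu⟩ := hcolr u o (Finset.mem_filter.1 hu).2
      obtain ⟨bv, hbv⟩ := hcolr v o (Finset.mem_filter.1 hv).2
      have hρu : ρ p = u := by rw [← hup]; exact ρ.apply_symm_apply u
      have hρv : ρ q = v := by rw [← hvq]; exact ρ.apply_symm_apply v
      have hadj : (HHgraph k).Adj u v := by
        show ¬ (ρ.symm u).1 = (ρ.symm v).1
        rw [hup, hvq]; exact fun hh => absurd hh (ne_of_lt hlt)
      have hprop := hc hadj
      have hsig : sigH k s(u, v) = sgnP k p q := by
        show sgnP k (ρ.symm u) (ρ.symm v) = sgnP k p q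
        rw [hup, hvq]
      have hq2 : sgnP k p q = decide (p.2 ≤ q.2) := by
        unfold sgnP; rw [if_pos hlt]
      rw [hsig, hq2, hbu, hbv] at hprop
      have hiff : ((p.2 : ℕ) ≤ (q.2 : ℕ)) ↔ bu ≠ bv := by
        by_cases hle : p.2 ≤ q.2
        · rw [decide_eq_true hle] at hprop
          simp only [signAct, if_pos] at hprop
          constructor
          · intro _ hb
            exact hprop (by rw [hb])
          · intro _; exact Fin.le_def.1 hle
        · rw [decide_eq_false hle] at hprop
          simp only [signAct, Bool.false_eq_true, if_false, symNeg] at hprop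
          have hbb : bu = bv := by
            rcases bu <;> rcases bv <;> simp_all
          constructor
          · intro hc'
            exact absurd (Fin.le_def.2 hc') hle
          · intro hne; exact absurd hbb hne
      simp only [hρu, hρv, hbu, hbv, bOf]
      exact circD_bool p.2.isLt q.2.isLt bu bv hiff
  have hcardV : (Finset.univ : Finset (Fin (k * k))).card = k * k := by simp
  have hbound : ∑ o : Fin t ⊕ Fin k', ((Finset.univ : Finset (Fin (k*k))).filter
      (fun v => ω v = o)).card ≤ t * k + k' * (k + 1) := by
    rw [Fintype.sum_sum_type]
    have h1 : ∑ o : Fin t, ((Finset.univ : Finset (Fin (k*k))).filter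
        (fun v => ω v = Sum.inl o)).card ≤ t * k := by
      calc _ ≤ ∑ _o : Fin t, k := Finset.sum_le_sum (fun o _ => hfib1 o)
        _ = t * k := by simp [Finset.sum_const, Finset.card_univ, mul_comm]
    have h2 : ∑ o : Fin k', ((Finset.univ : Finset (Fin (k*k))).filter
        (fun v => ω v = Sum.inr o)).card ≤ k' * (k + 1) := by
      calc _ ≤ ∑ _o : Fin k', (k+1) := Finset.sum_le_sum (fun o _ => hfib2 o)
        _ = k' * (k+1) := by simp [Finset.sum_const, Finset.card_univ, mul_comm]
    omega
  have hfinal : k * k ≤ t * k + k' * (k + 1) := by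
    rw [← hcardV, hsum]; exact hbound
  have hmul : (t + k' + 1) * k ≤ k * k := Nat.mul_le_mul_right _ h
  nlinarith

lemma HH_colorable (k : ℕ) : (HHgraph k).Colorable k :=
  ⟨SimpleGraph.Coloring.mk (fun v => (finProdFinEquiv.symm v).1) (fun hadj => hadj)⟩

lemma HH_chrom (k : ℕ) : chrom (HHgraph k) = k := by
  have hle : (HHgraph k).chromaticNumber ≤ (k : ℕ∞) :=
    (HH_colorable k).chromaticNumber_le
  have hclique : (HHgraph k).IsClique
      (↑(Finset.univ.image (fun i : Fin k => finProdFinEquiv (i, i))) : Set (Fin (k*k))) := by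
    intro u hu v hv huv
    simp only [Finset.coe_image, Set.mem_image, Finset.mem_coe, Finset.coe_univ,
      Set.image_univ, Set.mem_range] at hu hv
    obtain ⟨i, rfl⟩ := hu
    obtain ⟨j, rfl⟩ := hv
    show ¬ (finProdFinEquiv.symm (finProdFinEquiv (i, i))).1
        = (finProdFinEquiv.symm (finProdFinEquiv (j, j))).1
    rw [Equiv.symm_apply_apply, Equiv.symm_apply_apply]
    intro hij
    exact huv (by rw [show i = j from hij])
  have hge := hclique.card_le_chromaticNumber
  have hcard : (Finset.univ.image (fun i : Fin k => finProdFinEquiv (i, i))).card = k := by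
    rw [Finset.card_image_of_injective]
    · simp
    · intro i j hij
      have := finProdFinEquiv.injective hij
      exact (Prod.ext_iff.1 this).1
  rw [hcard] at hge
  have : (HHgraph k).chromaticNumber = (k : ℕ∞) := le_antisymm hle hge
  rw [chrom, this]
  simp

end SymSet

namespace SymSet

/-- if `χ(G) = k` then for every `t ≤ k` and every signature
`σ`, `χ^t_sym(G,σ) ≤ 2k - t`; moreover `χ^t_sym(±G) = 2k - t` for the signed
expansion `±G`, and there exists a simple signed graph `(H, σ_H)` with
`χ(H) = k` and `χ^t_sym(H, σ_H) = 2k - t`. -/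
theorem stmt4 {V : Type*} [Fintype V] (G : SimpleGraph V) (k : ℕ)
    (hk : chrom G = k) (t : ℕ) (ht : t ≤ k) :
    (∀ σ : Sym2 V → Bool, symChromT G σ t ≤ 2 * k - t) ∧
    expSymChromT G t = 2 * k - t ∧
    (∃ (m : ℕ) (H : SimpleGraph (Fin m)) (σH : Sym2 (Fin m) → Bool),
      chrom H = k ∧ symChromT H σH t = 2 * k - t) := by
  -- basic facts about the chromatic number of `G`
  have hfin : G.chromaticNumber ≠ ⊤ := by
    have h1 := G.colorable_of_fintype.chromaticNumber_le
    exact ne_top_of_le_ne_top (by simp) h1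
  have hcn : G.chromaticNumber = (k : ℕ∞) := by
    rw [← hk, chrom, ENat.coe_toNat hfin]
  have hcolk : G.Colorable k := by
    have h := G.colorable_chromaticNumber_of_fintype
    rwa [show G.chromaticNumber.toNat = k from hk] at h
  obtain ⟨C⟩ := hcolk
  obtain ⟨c0, hc0⟩ := exists_std_coloring ht G C
  refine ⟨?_, ?_, ?_⟩
  · -- Part 1: upper bound for every signature
    intro σ
    apply Nat.sInf_le
    exact ⟨k - t, by omega, c0, isProperColoring_of_std hc0 σ⟩
  · -- Part 2: the signed expansion
    set S : Set ℕ := {n | ∃ k', n = t + 2 * k' ∧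
      ∃ c : V → Sym t k', IsProperExpColoring G c} with hS
    have hmem : (2 * k - t) ∈ S := ⟨k - t, by omega, c0, fun v w hadj => hc0 hadj⟩
    have hlow : ∀ n ∈ S, 2 * k - t ≤ n := by
      rintro n ⟨k', rfl, c, hcexp⟩
      by_contra hlt
      push_neg at hlt
      have hvalid : ∀ {v w : V}, G.Adj v w →
          Sum.map id Prod.fst (c v) ≠ Sum.map id Prod.fst (c w) := by
        intro v w hadj hEq
        obtain ⟨h1, h2⟩ := hcexp hadj
        rcases hcv : c v with a | ⟨a, b⟩ <;> rcases hcw : c w with a' | ⟨a', b'⟩ <;>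
          rw [hcv, hcw] at h1 h2 hEq <;> simp at hEq
        · exact h1 (by rw [hEq])
        · subst hEq
          rcases b <;> rcases b' <;> simp [symNeg] at h1 h2
      have hcol' : G.Colorable (t + k') := by
        have C' : G.Coloring (Fin t ⊕ Fin k') :=
          SimpleGraph.Coloring.mk (fun v => Sum.map id Prod.fst (c v))
            (fun hadj => hvalid hadj)
        have := C'.colorable
        simpa using this
      have h2 : (k : ℕ∞) ≤ ((t + k' : ℕ) : ℕ∞) := hcn ▸ hcol'.chromaticNumber_le
      have h3 : k ≤ t + k' := by exact_mod_cast h2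
      omega
    exact le_antisymm (Nat.sInf_le hmem) (hlow _ (Nat.sInf_mem ⟨_, hmem⟩))
  · -- Part 3: the simple signed graph `(HHgraph k, sigH k)`
    refine ⟨k * k, HHgraph k, sigH k, HH_chrom k, ?_⟩
    obtain ⟨CH⟩ := HH_colorable k
    obtain ⟨cH, hcH⟩ := exists_std_coloring ht (HHgraph k) CH
    set S : Set ℕ := {n | ∃ k', n = t + 2 * k' ∧
      SymColorable (HHgraph k) (sigH k) t k'} with hS
    have hmem : (2 * k - t) ∈ S :=
      ⟨k - t, by omega, cH, isProperColoring_of_std hcH (sigH k)⟩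
    have hlow : ∀ n ∈ S, 2 * k - t ≤ n := by
      rintro n ⟨k', rfl, hcol'⟩
      by_contra hlt
      push_neg at hlt
      exact HH_no_coloring (by omega) hcol'
    exact le_antisymm (Nat.sInf_le hmem) (hlow _ (Nat.sInf_mem ⟨_, hmem⟩))

end SymSet
end

section
/- Let (G,σ) be a signed graph. If t = χ(G) − 1, then χ^t_sym(G,σ) = χ(G) + 1. -/
namespace SymSet

/-- if `t = χ(G) - 1`, then `χ^t_sym(G, σ) = χ(G) + 1`. -/
theorem stmt5 {V : Type*} [Fintype V] (G : SimpleGraph V) (σ : Sym2 V → Bool)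
    (t : ℕ) (ht : t + 1 = chrom G) :
    symChromT G σ t = chrom G + 1 := by
  -- G is colorable with t+1 colors
  have hcol : G.Colorable (t + 1) := by
    have := G.colorable_chromaticNumber_of_fintype
    rwa [← chrom, ← ht] at this
  -- G is not colorable with t colors
  have hnot : ¬ G.Colorable t := by
    intro h
    have h1 : G.chromaticNumber ≤ (t : ℕ∞) := h.chromaticNumber_le
    have h2 : G.chromaticNumber.toNat ≤ t := by
      have := ENat.toNat_le_toNat h1 (by simp)
      simpa using this
    rw [chrom] at ht
    omega
  -- colorable with t self-inverse and 1 pair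
  obtain ⟨C⟩ := hcol
  have hmem : t + 2 ∈ {n | ∃ k, n = t + 2 * k ∧ SymColorable G σ t k} := by
    refine ⟨1, by ring, ?_⟩
    classical
    refine ⟨fun v => if h : (C v : ℕ) < t then .inl ⟨C v, h⟩ else .inr (0, true), ?_⟩
    intro v w hadj
    have hne : C v ≠ C w := C.valid hadj
    by_cases hv : (C v : ℕ) < t <;> by_cases hw : (C w : ℕ) < t <;>
      simp only [hv, hw, dif_pos, dif_neg, not_false_eq_true, signAct, symNeg]
    · intro hcontra
      have : (C v : ℕ) = (C w : ℕ) := by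
        cases hsig : σ s(v, w) <;> simp [hsig, symNeg] at hcontra <;>
          exact congrArg Fin.val (Fin.mk.injEq _ _ _ _ ▸ hcontra)
      exact hne (Fin.ext this)
    · cases hsig : σ s(v, w) <;> simp [hsig, symNeg]
    · cases hsig : σ s(v, w) <;> simp [hsig, symNeg]
    · have : (C v : ℕ) = t := by omega
      have : (C w : ℕ) = t := by omega
      exact absurd (Fin.ext (by omega)) hne
  -- any member of the set is ≥ t + 2
  have hlb : ∀ n ∈ {n | ∃ k, n = t + 2 * k ∧ SymColorable G σ t k}, t + 2 ≤ n := by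
    rintro n ⟨k, rfl, c, hc⟩
    rcases k with _ | k
    · exfalso
      apply hnot
      refine ⟨fun v => (c v).elim id (fun p => (Fin.elim0 p.1 : Fin t)), ?_⟩
      intro v w hadj
      have h1 := hc hadj
      have h2 : signAct (σ s(v, w)) (c w) = c w := by
        cases hcw : c w with
        | inl i => cases σ s(v, w) <;> simp [signAct, symNeg]
        | inr p => exact p.1.elim0
      rw [h2] at h1
      intro hcontra
      cases hcv : c v with
      | inl i =>
        cases hcw : c w with
        | inl j =>
          apply h1
          rw [hcv, hcw]
          simp [hcv, hcw] at hcontra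
          exact congrArg Sum.inl hcontra
        | inr p => exact p.1.elim0
      | inr p => exact p.1.elim0
    · omega
  have : sInf {n | ∃ k, n = t + 2 * k ∧ SymColorable G σ t k} = t + 2 :=
    le_antisymm (Nat.sInf_le hmem) (le_csInf ⟨_, hmem⟩ hlb)
  rw [symChromT, this]
  omega

end SymSet
end

section
/- Let K_n be the complete graph on n ≥ 3 vertices, σ a signature of K_n, and t ∈ {0,…,n}. If Δ(K_n) − t is odd, then χ^t_sym(K_n,σ) ≤ Δ(K_n) + 1. If Δ(K_n) − t is even, then χ^t_sym(K_n,σ) = Δ(K_n) + 2 or χ^t_sym(K_n,σ) ≤ Δ(K_n); furthermore χ^t_sym(K_n,σ) = Δ(K_n) + 2 if and only if (K_n,σ) is switching-equivalent to the all-positive signed graph (K_n,+1) or t = n − 1. -/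
namespace SymSet

/-! ### Auxiliary lemmas -/

lemma signAct_inl {t k : ℕ} (s : Bool) (i : Fin t) :
    signAct s (Sum.inl i : Sym t k) = Sum.inl i := by cases s <;> rfl

lemma signAct_inr {t k : ℕ} (s : Bool) (j : Fin k) (b : Bool) :
    signAct s (Sum.inr (j, b) : Sym t k) = Sum.inr (j, xor (!s) b) := by
  cases s <;> cases b <;> rfl

/-- Build a proper coloring from a "class function" `P` and a "side function" `b`. -/
lemma core {V : Type*} (G : SimpleGraph V) (σ : Sym2 V → Bool) {t k : ℕ}
    (P : V → Fin t ⊕ Fin k) (b : V → Bool)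
    (h1 : ∀ v w, G.Adj v w → ∀ i, P v = Sum.inl i → P w = Sum.inl i → False)
    (h2 : ∀ v w, G.Adj v w → ∀ j, P v = Sum.inr j → P w = Sum.inr j →
      σ s(v, w) = xor (b v) (b w)) :
    IsProperColoring G σ
      (fun v => Sum.elim Sum.inl (fun j => Sum.inr (j, b v)) (P v)) := by
  intro v w hadj
  rcases hv : P v with i | j <;> rcases hw : P w with i' | j' <;>
    simp only [hv, hw, Sum.elim_inl, Sum.elim_inr]
  · rw [signAct_inl]
    intro hc
    rw [Sum.inl.injEq] at hc
    exact h1 v w hadj i hv (by rw [hw, hc])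
  · rw [signAct_inr]; simp
  · rw [signAct_inl]; simp
  · rw [signAct_inr]
    intro hc
    rw [Sum.inr.injEq, Prod.mk.injEq] at hc
    obtain ⟨hj, hbb⟩ := hc
    have hσ := h2 v w hadj j hv (by rw [hw, hj])
    rw [hσ] at hbb
    revert hbb
    cases b v <;> cases b w <;> decide

lemma proper_inl {V : Type*} {G : SimpleGraph V} {σ : Sym2 V → Bool} {t k : ℕ}
    {c : V → Sym t k} (hc : IsProperColoring G σ c) {v w : V} (h : G.Adj v w)
    {i : Fin t} (hv : c v = Sum.inl i) (hw : c w = Sum.inl i) : False := by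
  have := hc h
  rw [hv, hw, signAct_inl] at this
  exact this rfl

lemma proper_inr {V : Type*} {G : SimpleGraph V} {σ : Sym2 V → Bool} {t k : ℕ}
    {c : V → Sym t k} (hc : IsProperColoring G σ c) {v w : V} (h : G.Adj v w)
    {j : Fin k} {x y : Bool}
    (hv : c v = Sum.inr (j, x)) (hw : c w = Sum.inr (j, y)) :
    σ s(v, w) = xor x y := by
  have hc' := hc h
  rw [hv, hw, signAct_inr] at hc'
  revert hc'
  cases hσ : σ s(v, w) <;> cases x <;> cases y <;> simp

lemma bool_helper : ∀ p q r x y z : Bool,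
    (!(xor p q)) = xor x y → (!(xor p r)) = xor x z → (!(xor q r)) = xor y z → False := by
  decide

lemma symChromT_le {V : Type*} (G : SimpleGraph V) (σ : Sym2 V → Bool) {t k : ℕ}
    (h : SymColorable G σ t k) : symChromT G σ t ≤ t + 2 * k :=
  Nat.sInf_le ⟨k, rfl, h⟩

lemma symChromT_spec {V : Type*} (G : SimpleGraph V) (σ : Sym2 V → Bool) {t k₀ : ℕ}
    (h : SymColorable G σ t k₀) :
    ∃ k, symChromT G σ t = t + 2 * k ∧ SymColorable G σ t k := by
  have h0 : {m | ∃ k, m = t + 2 * k ∧ SymColorable G σ t k}.Nonempty :=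
    ⟨t + 2 * k₀, k₀, rfl, h⟩
  exact Nat.sInf_mem h0

lemma count_le {n t k : ℕ} (f : Fin n → Fin t ⊕ Fin k)
    (h1 : ∀ i, (Finset.univ.filter (fun v => f v = Sum.inl i)).card ≤ 1)
    (h2 : ∀ j, (Finset.univ.filter (fun v => f v = Sum.inr j)).card ≤ 2) :
    n ≤ t + 2 * k := by
  have hcard := Finset.card_eq_sum_card_fiberwise
    (f := f) (s := Finset.univ) (t := Finset.univ) (fun x _ => Finset.mem_univ _)
  rw [Finset.card_univ, Fintype.card_fin] at hcard
  rw [hcard, Fintype.sum_sum_type]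
  have e1 : ∑ i : Fin t, (Finset.univ.filter (fun v => f v = Sum.inl i)).card ≤ t := by
    calc ∑ i : Fin t, (Finset.univ.filter (fun v => f v = Sum.inl i)).card
        ≤ ∑ _i : Fin t, 1 := Finset.sum_le_sum (fun i _ => h1 i)
      _ = t := by simp
  have e2 : ∑ j : Fin k, (Finset.univ.filter (fun v => f v = Sum.inr j)).card ≤ 2 * k := by
    calc ∑ j : Fin k, (Finset.univ.filter (fun v => f v = Sum.inr j)).card
        ≤ ∑ _j : Fin k, 2 := Finset.sum_le_sum (fun j _ => h2 j)
      _ = 2 * k := by simp [mul_comm]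
  omega

/-- The basic coloring: `t` singletons and pairing up of the remaining vertices. -/
lemma upper {n : ℕ} (σ : Sym2 (Fin n) → Bool) (t : ℕ) :
    SymColorable (⊤ : SimpleGraph (Fin n)) σ t ((n - t + 1) / 2) := by
  set k := (n - t + 1) / 2 with hk
  set P : Fin n → Fin t ⊕ Fin k := fun v =>
    if h : v.val < t then Sum.inl ⟨v.val, h⟩
    else Sum.inr ⟨(v.val - t) / 2, by have := v.isLt; omega⟩ with hP
  set b : Fin n → Bool := fun v =>
    if (v.val - t) % 2 = 0 then true
    else !σ s(⟨v.val - 1, Nat.lt_of_le_of_lt (Nat.sub_le _ _) v.isLt⟩, v) with hb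
  have hPinl : ∀ (v : Fin n) (i : Fin t), P v = Sum.inl i → v.val = i.val := by
    intro v i hv
    simp only [hP] at hv
    by_cases h : v.val < t
    · rw [dif_pos h] at hv
      exact congrArg Fin.val (Sum.inl.inj hv)
    · rw [dif_neg h] at hv
      exact absurd hv (by simp)
  have hPinr : ∀ (v : Fin n) (j : Fin k), P v = Sum.inr j →
      ¬ v.val < t ∧ (v.val - t) / 2 = j.val := by
    intro v j hv
    simp only [hP] at hv
    by_cases h : v.val < t
    · rw [dif_pos h] at hv
      exact absurd hv (by simp)
    · rw [dif_neg h] at hv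
      exact ⟨h, congrArg Fin.val (Sum.inr.inj hv)⟩
  have hbv0 : ∀ v : Fin n, (v.val - t) % 2 = 0 → b v = true := by
    intro v h; simp only [hb]; rw [if_pos h]
  have hbv1 : ∀ v : Fin n, ¬ (v.val - t) % 2 = 0 →
      b v = !σ s(⟨v.val - 1, Nat.lt_of_le_of_lt (Nat.sub_le _ _) v.isLt⟩, v) := by
    intro v h; simp only [hb]; rw [if_neg h]
  refine ⟨_, core _ σ P b ?_ ?_⟩
  · intro v w hadj i hv hw
    exact (by simpa using hadj : v ≠ w)
      (Fin.val_injective ((hPinl v i hv).trans (hPinl w i hw).symm))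
  · intro v w hadj j hv hw
    have hvw : v ≠ w := by simpa using hadj
    obtain ⟨hvt, hvj⟩ := hPinr v j hv
    obtain ⟨hwt, hwj⟩ := hPinr w j hw
    rcases Nat.lt_trichotomy v.val w.val with hlt | heq | hgt
    · have hkey : w.val = v.val + 1 ∧ (v.val - t) % 2 = 0 := by
        have := v.isLt; have := w.isLt; omega
      rw [hbv0 v hkey.2, hbv1 w (by omega)]
      have hvv : (⟨w.val - 1, Nat.lt_of_le_of_lt (Nat.sub_le _ _) w.isLt⟩ : Fin n) = v := by
        apply Fin.val_injective; show w.val - 1 = v.val; omega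
      rw [hvv]
      cases hσ : σ s(v, w) <;> rfl
    · exact absurd (Fin.val_injective heq) hvw
    · have hkey : v.val = w.val + 1 ∧ (w.val - t) % 2 = 0 := by
        have := v.isLt; have := w.isLt; omega
      rw [hbv0 w hkey.2, hbv1 v (by omega)]
      have hvv : (⟨v.val - 1, Nat.lt_of_le_of_lt (Nat.sub_le _ _) v.isLt⟩ : Fin n) = w := by
        apply Fin.val_injective; show v.val - 1 = w.val; omega
      rw [hvv, show s(w, v) = s(v, w) from Sym2.eq_swap]
      cases hσ : σ s(v, w) <;> rfl

/-- The improved coloring when the last three vertices span a triangle with an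
odd number of negative edges. -/
lemma tri_arith {n : ℕ} (t : ℕ) (hn : 3 ≤ n) (ht3 : t + 3 ≤ n)
    (hpar : (n - t) % 2 = 1) (σ : Sym2 (Fin n) → Bool) (x1 x2 x3 : Fin n)
    (e1 : x1.val = n - 3) (e2 : x2.val = n - 2) (e3 : x3.val = n - 1)
    (htri : xor (σ s(x1, x2)) (xor (σ s(x1, x3)) (σ s(x2, x3))) = false) :
    SymColorable (⊤ : SimpleGraph (Fin n)) σ t ((n - 1 - t) / 2) := by
  set k := (n - 1 - t) / 2 with hk
  set P : Fin n → Fin t ⊕ Fin k := fun v =>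
    if h : v.val < t then Sum.inl ⟨v.val, h⟩
    else if h2 : v.val < n - 3 then Sum.inr ⟨(v.val - t) / 2, by omega⟩
    else Sum.inr ⟨k - 1, by omega⟩ with hP
  set b : Fin n → Bool := fun v =>
    if v.val < n - 3 then
      (if (v.val - t) % 2 = 0 then true
       else !σ s(⟨v.val - 1, Nat.lt_of_le_of_lt (Nat.sub_le _ _) v.isLt⟩, v))
    else if v.val = n - 3 then true
    else if v.val = n - 2 then !σ s(x1, x2)
    else !σ s(x1, x3) with hb
  have hPinl : ∀ (v : Fin n) (i : Fin t), P v = Sum.inl i → v.val = i.val := by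
    intro v i hv
    simp only [hP] at hv
    by_cases h : v.val < t
    · rw [dif_pos h] at hv
      exact congrArg Fin.val (Sum.inl.inj hv)
    · rw [dif_neg h] at hv
      by_cases h2 : v.val < n - 3
      · rw [dif_pos h2] at hv; exact absurd hv (by simp)
      · rw [dif_neg h2] at hv; exact absurd hv (by simp)
  have hPinr : ∀ (v : Fin n) (j : Fin k), P v = Sum.inr j → ¬ v.val < t ∧
      ((v.val < n - 3 ∧ (v.val - t) / 2 = j.val) ∨ (¬ v.val < n - 3 ∧ j.val = k - 1)) := by
    intro v j hv
    simp only [hP] at hv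
    by_cases h : v.val < t
    · rw [dif_pos h] at hv; exact absurd hv (by simp)
    · rw [dif_neg h] at hv
      by_cases h2 : v.val < n - 3
      · rw [dif_pos h2] at hv
        exact ⟨h, Or.inl ⟨h2, congrArg Fin.val (Sum.inr.inj hv)⟩⟩
      · rw [dif_neg h2] at hv
        exact ⟨h, Or.inr ⟨h2, (congrArg Fin.val (Sum.inr.inj hv)).symm⟩⟩
  have hbv0 : ∀ v : Fin n, v.val < n - 3 → (v.val - t) % 2 = 0 → b v = true := by
    intro v h h'; simp only [hb]; rw [if_pos h, if_pos h']
  have hbv1 : ∀ v : Fin n, v.val < n - 3 → ¬ (v.val - t) % 2 = 0 →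
      b v = !σ s(⟨v.val - 1, Nat.lt_of_le_of_lt (Nat.sub_le _ _) v.isLt⟩, v) := by
    intro v h h'; simp only [hb]; rw [if_pos h, if_neg h']
  have hb1 : b x1 = true := by
    simp only [hb]; rw [if_neg (by omega), if_pos e1]
  have hb2 : b x2 = !σ s(x1, x2) := by
    simp only [hb]; rw [if_neg (by omega), if_neg (by omega), if_pos e2]
  have hb3 : b x3 = !σ s(x1, x3) := by
    simp only [hb]; rw [if_neg (by omega), if_neg (by omega), if_neg (by omega)]
  refine ⟨_, core _ σ P b ?_ ?_⟩
  · intro v w hadj i hv hw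
    exact (by simpa using hadj : v ≠ w)
      (Fin.val_injective ((hPinl v i hv).trans (hPinl w i hw).symm))
  · intro v w hadj j hv hw
    have hvw : v ≠ w := by simpa using hadj
    obtain ⟨hvt, hvc⟩ := hPinr v j hv
    obtain ⟨hwt, hwc⟩ := hPinr w j hw
    rcases hvc with ⟨hvm, hvj⟩ | ⟨hvm, hvj⟩
    · rcases hwc with ⟨hwm, hwj⟩ | ⟨hwm, hwj⟩
      · -- both in the paired-up middle part
        rcases Nat.lt_trichotomy v.val w.val with hlt | heq | hgt
        · have hkey : w.val = v.val + 1 ∧ (v.val - t) % 2 = 0 := by omega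
          rw [hbv0 v hvm hkey.2, hbv1 w hwm (by omega)]
          have hvv : (⟨w.val - 1, Nat.lt_of_le_of_lt (Nat.sub_le _ _) w.isLt⟩ : Fin n) = v := by
            apply Fin.val_injective; show w.val - 1 = v.val; omega
          rw [hvv]
          cases hσ : σ s(v, w) <;> rfl
        · exact absurd (Fin.val_injective heq) hvw
        · have hkey : v.val = w.val + 1 ∧ (w.val - t) % 2 = 0 := by omega
          rw [hbv0 w hwm hkey.2, hbv1 v hvm (by omega)]
          have hvv : (⟨v.val - 1, Nat.lt_of_le_of_lt (Nat.sub_le _ _) v.isLt⟩ : Fin n) = w := by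
            apply Fin.val_injective; show v.val - 1 = w.val; omega
          rw [hvv, show s(w, v) = s(v, w) from Sym2.eq_swap]
          cases hσ : σ s(v, w) <;> rfl
      · exact absurd rfl (by omega : ¬ (j.val = j.val))
    · rcases hwc with ⟨hwm, hwj⟩ | ⟨hwm, hwj⟩
      · exact absurd rfl (by omega : ¬ (j.val = j.val))
      · -- both in the triangle
        have hv3 : v.val = n - 3 ∨ v.val = n - 2 ∨ v.val = n - 1 := by
          have := v.isLt; omega
        have hw3 : w.val = n - 3 ∨ w.val = n - 2 ∨ w.val = n - 1 := by
          have := w.isLt; omega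
        have hne : v.val ≠ w.val := fun h => hvw (Fin.val_injective h)
        rcases hv3 with hv3 | hv3 | hv3 <;> rcases hw3 with hw3 | hw3 | hw3
        · omega
        · -- v = x1, w = x2
          have hveq : v = x1 := Fin.val_injective (by omega)
          have hweq : w = x2 := Fin.val_injective (by omega)
          rw [hveq, hweq]
          rw [hb1, hb2]
          cases hσ : σ s(x1, x2) <;> rfl
        · have hveq : v = x1 := Fin.val_injective (by omega)
          have hweq : w = x3 := Fin.val_injective (by omega)
          rw [hveq, hweq]
          rw [hb1, hb3]
          cases hσ : σ s(x1, x3) <;> rfl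
        · have hveq : v = x2 := Fin.val_injective (by omega)
          have hweq : w = x1 := Fin.val_injective (by omega)
          rw [hveq, hweq]
          rw [hb1, hb2, show s(x2, x1) = s(x1, x2) from Sym2.eq_swap]
          cases hσ : σ s(x1, x2) <;> rfl
        · omega
        · -- v = x2, w = x3
          have hveq : v = x2 := Fin.val_injective (by omega)
          have hweq : w = x3 := Fin.val_injective (by omega)
          rw [hveq, hweq]
          rw [hb2, hb3]
          revert htri
          cases hσ1 : σ s(x1, x2) <;> cases hσ2 : σ s(x1, x3) <;>
            cases hσ3 : σ s(x2, x3) <;> decide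
        · have hveq : v = x3 := Fin.val_injective (by omega)
          have hweq : w = x1 := Fin.val_injective (by omega)
          rw [hveq, hweq]
          rw [hb1, hb3, show s(x3, x1) = s(x1, x3) from Sym2.eq_swap]
          cases hσ : σ s(x1, x3) <;> rfl
        · have hveq : v = x3 := Fin.val_injective (by omega)
          have hweq : w = x2 := Fin.val_injective (by omega)
          rw [hveq, hweq]
          rw [hb2, hb3, show s(x3, x2) = s(x2, x3) from Sym2.eq_swap]
          revert htri
          cases hσ1 : σ s(x1, x2) <;> cases hσ2 : σ s(x1, x3) <;>
            cases hσ3 : σ s(x2, x3) <;> decide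
        · omega

lemma exists_perm {n : ℕ} (hn : 3 ≤ n) (a b c : Fin n)
    (hab : a ≠ b) (hac : a ≠ c) (hbc : b ≠ c) :
    ∃ π : Equiv.Perm (Fin n),
      π a = ⟨n - 3, by omega⟩ ∧ π b = ⟨n - 2, by omega⟩ ∧ π c = ⟨n - 1, by omega⟩ := by
  obtain ⟨x1, hx1⟩ : ∃ x : Fin n, x.val = n - 3 := ⟨⟨n - 3, by omega⟩, rfl⟩
  obtain ⟨x2, hx2⟩ : ∃ x : Fin n, x.val = n - 2 := ⟨⟨n - 2, by omega⟩, rfl⟩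
  obtain ⟨x3, hx3⟩ : ∃ x : Fin n, x.val = n - 1 := ⟨⟨n - 1, by omega⟩, rfl⟩
  have h12 : x1 ≠ x2 := fun h => by have := congrArg Fin.val h; omega
  have h13 : x1 ≠ x3 := fun h => by have := congrArg Fin.val h; omega
  have h23 : x2 ≠ x3 := fun h => by have := congrArg Fin.val h; omega
  obtain ⟨π1, hπ1⟩ : ∃ π : Equiv.Perm (Fin n), π = Equiv.swap a x1 := ⟨_, rfl⟩
  have hπ1a : π1 a = x1 := by rw [hπ1]; exact Equiv.swap_apply_left a x1
  obtain ⟨b1, hb1⟩ : ∃ x, x = π1 b := ⟨_, rfl⟩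
  obtain ⟨c1, hc1⟩ : ∃ x, x = π1 c := ⟨_, rfl⟩
  have hb1x : b1 ≠ x1 := fun h => hab (π1.injective (by rw [← hb1, h, hπ1a]))
  have hc1x : c1 ≠ x1 := fun h => hac (π1.injective (by rw [← hc1, h, hπ1a]))
  have hb1c1 : b1 ≠ c1 := fun h => hbc (π1.injective (by rw [← hb1, ← hc1, h]))
  obtain ⟨π2, hπ2⟩ : ∃ π : Equiv.Perm (Fin n), π = Equiv.swap b1 x2 := ⟨_, rfl⟩
  have hπ2b : π2 b1 = x2 := by rw [hπ2]; exact Equiv.swap_apply_left b1 x2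
  have hπ2x1 : π2 x1 = x1 := by
    rw [hπ2]; exact Equiv.swap_apply_of_ne_of_ne (Ne.symm hb1x) h12
  obtain ⟨c2, hc2⟩ : ∃ x, x = π2 c1 := ⟨_, rfl⟩
  have hc2x1 : c2 ≠ x1 := fun h => hc1x (π2.injective (by rw [← hc2, h, hπ2x1]))
  have hc2x2 : c2 ≠ x2 := fun h => (hb1c1 (π2.injective (by rw [← hc2, h, hπ2b]))).elim
  obtain ⟨π3, hπ3⟩ : ∃ π : Equiv.Perm (Fin n), π = Equiv.swap c2 x3 := ⟨_, rfl⟩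
  have hπ3c : π3 c2 = x3 := by rw [hπ3]; exact Equiv.swap_apply_left c2 x3
  have hπ3x1 : π3 x1 = x1 := by
    rw [hπ3]; exact Equiv.swap_apply_of_ne_of_ne (Ne.symm hc2x1) h13
  have hπ3x2 : π3 x2 = x2 := by
    rw [hπ3]; exact Equiv.swap_apply_of_ne_of_ne (Ne.symm hc2x2) h23
  have hgoal1 : x1 = (⟨n - 3, by omega⟩ : Fin n) := by
    apply Fin.val_injective; show x1.val = n - 3; omega
  have hgoal2 : x2 = (⟨n - 2, by omega⟩ : Fin n) := by
    apply Fin.val_injective; show x2.val = n - 2; omega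
  have hgoal3 : x3 = (⟨n - 1, by omega⟩ : Fin n) := by
    apply Fin.val_injective; show x3.val = n - 1; omega
  refine ⟨(π1.trans π2).trans π3, ?_, ?_, ?_⟩
  · show π3 (π2 (π1 a)) = _
    rw [hπ1a, hπ2x1, hπ3x1, hgoal1]
  · show π3 (π2 (π1 b)) = _
    rw [← hb1, hπ2b, hπ3x2, hgoal2]
  · show π3 (π2 (π1 c)) = _
    rw [← hc1, ← hc2, hπ3c, hgoal3]

lemma colorable_perm {n t k : ℕ} (σ : Sym2 (Fin n) → Bool) (π : Equiv.Perm (Fin n))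
    (h : SymColorable (⊤ : SimpleGraph (Fin n))
      (fun e => σ (Sym2.map π.symm e)) t k) :
    SymColorable (⊤ : SimpleGraph (Fin n)) σ t k := by
  obtain ⟨c, hc⟩ := h
  refine ⟨fun v => c (π v), fun v w hvw => ?_⟩
  have hvw' : v ≠ w := by simpa using hvw
  have hadj : (⊤ : SimpleGraph (Fin n)).Adj (π v) (π w) := by
    simp [π.injective.ne hvw']
  have := hc hadj
  simpa [Sym2.map_pair_eq, Equiv.symm_apply_apply] using this

lemma triangle_colorable {n : ℕ} (t : ℕ) (hn : 3 ≤ n) (ht3 : t + 3 ≤ n)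
    (hpar : (n - t) % 2 = 1) (σ : Sym2 (Fin n) → Bool) (a b c : Fin n)
    (hab : a ≠ b) (hac : a ≠ c) (hbc : b ≠ c)
    (htri : xor (σ s(a, b)) (xor (σ s(a, c)) (σ s(b, c))) = false) :
    SymColorable (⊤ : SimpleGraph (Fin n)) σ t ((n - 1 - t) / 2) := by
  obtain ⟨π, hπa, hπb, hπc⟩ := exists_perm hn a b c hab hac hbc
  apply colorable_perm σ π
  have hsa : π.symm ⟨n - 3, by omega⟩ = a := by rw [← hπa, Equiv.symm_apply_apply]
  have hsb : π.symm ⟨n - 2, by omega⟩ = b := by rw [← hπb, Equiv.symm_apply_apply]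
  have hsc : π.symm ⟨n - 1, by omega⟩ = c := by rw [← hπc, Equiv.symm_apply_apply]
  refine tri_arith t hn ht3 hpar _ ⟨n - 3, by omega⟩ ⟨n - 2, by omega⟩ ⟨n - 1, by omega⟩
    rfl rfl rfl ?_
  simp only [Sym2.map_pair_eq, hsa, hsb, hsc]
  exact htri

lemma equiv_prop {n : ℕ} {σ : Sym2 (Fin n) → Bool}
    (h : Equivalent (⊤ : SimpleGraph (Fin n)) σ (fun _ => true)) :
    ∃ X : Fin n → Bool, ∀ u v : Fin n, u ≠ v → σ s(u, v) = !(xor (X u) (X v)) := by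
  obtain ⟨X, hX⟩ := h
  refine ⟨X, fun u v huv => ?_⟩
  have hmem : s(u, v) ∈ (⊤ : SimpleGraph (Fin n)).edgeSet := by simpa using huv
  have := hX s(u, v) hmem
  simp only [switch, Sym2.lift_mk] at this
  revert this
  cases σ s(u, v) <;> cases X u <;> cases X v <;> decide

lemma equiv_of_no_triangle {n : ℕ} (hn : 3 ≤ n) {σ : Sym2 (Fin n) → Bool}
    (h : ∀ a b c : Fin n, a ≠ b → a ≠ c → b ≠ c →
      xor (σ s(a, b)) (xor (σ s(a, c)) (σ s(b, c))) = true) :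
    Equivalent (⊤ : SimpleGraph (Fin n)) σ (fun _ => true) := by
  have hn0 : 0 < n := by omega
  set v0 : Fin n := ⟨0, hn0⟩ with hv0
  refine ⟨fun v => if v = v0 then false else !σ s(v0, v), fun e he => ?_⟩
  induction e using Sym2.ind with
  | _ u v =>
    have huv : u ≠ v := by simpa using he
    simp only [switch, Sym2.lift_mk]
    by_cases hu : u = v0
    · subst hu
      rw [if_pos rfl, if_neg (Ne.symm huv)]
      cases σ s(v0, v) <;> rfl
    · by_cases hv : v = v0
      · subst hv
        rw [if_pos rfl, if_neg hu, show s(u, v0) = s(v0, u) from Sym2.eq_swap]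
        cases σ s(v0, u) <;> rfl
      · rw [if_neg hu, if_neg hv]
        have h3 := h v0 u v (Ne.symm hu) (Ne.symm hv) huv
        revert h3
        cases σ s(v0, u) <;> cases σ s(v0, v) <;> cases σ s(u, v) <;> decide

lemma lower_k0 {n t : ℕ} {σ : Sym2 (Fin n) → Bool}
    (h : SymColorable (⊤ : SimpleGraph (Fin n)) σ t 0) : n ≤ t := by
  obtain ⟨c, hc⟩ := h
  have hf : ∀ v : Fin n, ∃ i : Fin t, c v = Sum.inl i := by
    intro v
    rcases hcv : c v with i | ⟨j, x⟩
    · exact ⟨i, rfl⟩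
    · exact j.elim0
  choose f hf using hf
  have hinj : Function.Injective f := by
    intro v w hvw
    by_contra hne
    exact proper_inl hc ((SimpleGraph.top_adj v w).mpr hne) (hf v)
      (by rw [hf w, hvw])
  simpa using Fintype.card_le_of_injective f hinj

lemma lower_equiv {n t k : ℕ} {σ : Sym2 (Fin n) → Bool} (X : Fin n → Bool)
    (hX : ∀ u v : Fin n, u ≠ v → σ s(u, v) = !(xor (X u) (X v)))
    (h : SymColorable (⊤ : SimpleGraph (Fin n)) σ t k) : n ≤ t + 2 * k := by
  obtain ⟨c, hc⟩ := h
  apply count_le (fun v => Sum.map id Prod.fst (c v))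
  · intro i
    rw [Finset.card_le_one]
    intro v hvmem w hwmem
    simp only [Finset.mem_filter, Finset.mem_univ, true_and] at hvmem hwmem
    by_contra hne
    have hv : c v = Sum.inl i := by
      rcases h' : c v with i' | p
      · rw [h'] at hvmem; simp only [Sum.map_inl, Sum.inl.injEq, id_eq] at hvmem
        rw [hvmem]
      · rw [h'] at hvmem; simp at hvmem
    have hw : c w = Sum.inl i := by
      rcases h' : c w with i' | p
      · rw [h'] at hwmem; simp only [Sum.map_inl, Sum.inl.injEq, id_eq] at hwmem
        rw [hwmem]
      · rw [h'] at hwmem; simp at hwmem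
    exact proper_inl hc ((SimpleGraph.top_adj v w).mpr hne) hv hw
  · intro j
    by_contra hgt
    push_neg at hgt
    obtain ⟨u, hu, v, hv, w, hw, huv, huw, hvw⟩ := Finset.two_lt_card.mp hgt
    simp only [Finset.mem_filter, Finset.mem_univ, true_and] at hu hv hw
    have hcu : ∃ x, c u = Sum.inr (j, x) := by
      rcases h' : c u with i' | ⟨j', x⟩
      · rw [h'] at hu; simp at hu
      · rw [h'] at hu; simp only [Sum.map_inr, Sum.inr.injEq] at hu
        exact ⟨x, by rw [hu]⟩
    have hcv : ∃ x, c v = Sum.inr (j, x) := by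
      rcases h' : c v with i' | ⟨j', x⟩
      · rw [h'] at hv; simp at hv
      · rw [h'] at hv; simp only [Sum.map_inr, Sum.inr.injEq] at hv
        exact ⟨x, by rw [hv]⟩
    have hcw : ∃ x, c w = Sum.inr (j, x) := by
      rcases h' : c w with i' | ⟨j', x⟩
      · rw [h'] at hw; simp at hw
      · rw [h'] at hw; simp only [Sum.map_inr, Sum.inr.injEq] at hw
        exact ⟨x, by rw [hw]⟩
    obtain ⟨x, hx⟩ := hcu
    obtain ⟨y, hy⟩ := hcv
    obtain ⟨z, hz⟩ := hcw
    have e1 : (!(xor (X u) (X v))) = xor x y := by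
      rw [← hX u v huv]
      exact proper_inr hc ((SimpleGraph.top_adj u v).mpr huv) hx hy
    have e2 : (!(xor (X u) (X w))) = xor x z := by
      rw [← hX u w huw]
      exact proper_inr hc ((SimpleGraph.top_adj u w).mpr huw) hx hz
    have e3 : (!(xor (X v) (X w))) = xor y z := by
      rw [← hX v w hvw]
      exact proper_inr hc ((SimpleGraph.top_adj v w).mpr hvw) hy hz
    exact bool_helper _ _ _ _ _ _ e1 e2 e3

/-- Brooks' type theorem for complete graphs.
For `K_n` with `n ≥ 3`, `Δ(K_n) = n - 1` and `t ∈ {0, …, n}`: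
if `Δ(K_n) - t` is odd then `χ^t_sym(K_n,σ) ≤ Δ(K_n) + 1`;
if `Δ(K_n) - t` is even then `χ^t_sym(K_n,σ) = Δ(K_n) + 2` or
`χ^t_sym(K_n,σ) ≤ Δ(K_n)`, and `χ^t_sym(K_n,σ) = Δ(K_n) + 2` iff
`(K_n,σ)` is switching-equivalent to `(K_n, +1)` or `t = n - 1`. -/
theorem stmt7 (n : ℕ) (hn : 3 ≤ n) (σ : Sym2 (Fin n) → Bool) (t : ℕ)
    (ht : t ≤ n) :
    (Odd ((n : ℤ) - 1 - t) →
      symChromT (⊤ : SimpleGraph (Fin n)) σ t ≤ (n - 1) + 1) ∧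
    (Even ((n : ℤ) - 1 - t) →
      (symChromT (⊤ : SimpleGraph (Fin n)) σ t = (n - 1) + 2 ∨
        symChromT (⊤ : SimpleGraph (Fin n)) σ t ≤ n - 1) ∧
      (symChromT (⊤ : SimpleGraph (Fin n)) σ t = (n - 1) + 2 ↔
        Equivalent (⊤ : SimpleGraph (Fin n)) σ (fun _ => true) ∨ t = n - 1)) := by
  constructor
  · -- odd case
    intro hodd
    rw [Int.odd_iff] at hodd
    have h0 : (n - t) % 2 = 0 := by omega
    have h1 := symChromT_le (⊤ : SimpleGraph (Fin n)) σ (upper σ t)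
    omega
  · -- even case
    intro heven
    rw [Int.even_iff] at heven
    have hpar : (n - t) % 2 = 1 := by omega
    have htn : t + 1 ≤ n := by omega
    by_cases hE : Equivalent (⊤ : SimpleGraph (Fin n)) σ (fun _ => true) ∨ t = n - 1
    · -- χ = n + 1
      obtain ⟨k, hkeq, hkcol⟩ := symChromT_spec (⊤ : SimpleGraph (Fin n)) σ (upper σ t)
      have hlow : n + 1 ≤ t + 2 * k := by
        rcases hE with hEq | ht1
        · obtain ⟨X, hX⟩ := equiv_prop hEq
          have := lower_equiv X hX hkcol
          omega
        · rcases Nat.eq_zero_or_pos k with h0 | h0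
          · subst h0
            have := lower_k0 hkcol
            omega
          · omega
      have hub := symChromT_le (⊤ : SimpleGraph (Fin n)) σ (upper σ t)
      have hC : symChromT (⊤ : SimpleGraph (Fin n)) σ t = n + 1 := by omega
      refine ⟨Or.inl (by omega), fun _ => hE, fun _ => by omega⟩
    · -- χ ≤ n - 1
      push_neg at hE
      obtain ⟨hE1, hE2⟩ := hE
      have ht3 : t + 3 ≤ n := by omega
      have htri : ∃ a b c : Fin n, a ≠ b ∧ a ≠ c ∧ b ≠ c ∧
          xor (σ s(a, b)) (xor (σ s(a, c)) (σ s(b, c))) = false := by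
        by_contra hno
        push_neg at hno
        refine hE1 (equiv_of_no_triangle hn (fun a b c hab hac hbc => ?_))
        rcases Bool.eq_false_or_eq_true
          (xor (σ s(a, b)) (xor (σ s(a, c)) (σ s(b, c)))) with h | h
        · exact h
        · exact absurd h (hno a b c hab hac hbc)
      obtain ⟨a, b, c, hab, hac, hbc, hx⟩ := htri
      have hcol := triangle_colorable t hn ht3 hpar σ a b c hab hac hbc hx
      have hle := symChromT_le (⊤ : SimpleGraph (Fin n)) σ hcol
      have hle' : symChromT (⊤ : SimpleGraph (Fin n)) σ t ≤ n - 1 := by omega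
      refine ⟨Or.inr hle', fun hcontra => absurd hcontra (by omega),
        fun h => ?_⟩
      rcases h with h | h
      · exact absurd h hE1
      · exact absurd h hE2

end SymSet
end

section
/- Let (G,σ) be a simple connected signed graph and t ∈ {0,…,χ(G)}. If G is not regular, then χ^t_sym(G,σ) ≤ Δ(G) + 1 when Δ(G) − t is odd, and χ^t_sym(G,σ) ≤ Δ(G) when Δ(G) − t is even. -/
namespace SymSet


lemma signAct_invol {t k : ℕ} (s : Bool) (x : Sym t k) :
    signAct s (signAct s x) = x := by
  cases s <;> rcases x with i | ⟨i, b⟩ <;> simp [signAct, symNeg]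

lemma greedy (G : SimpleGraph V) [Fintype V] [DecidableRel G.Adj]
    (σ : Sym2 V → Bool) {t k : ℕ} (r : V → ℕ) (hinj : Function.Injective r)
    (hr : ∀ v, ((G.neighborFinset v).filter (fun w => r w < r v)).card < t + 2 * k) :
    SymColorable G σ t k := by
  classical
  cases isEmpty_or_nonempty V with
  | inl h => exact ⟨fun v => isEmptyElim v, fun v w h' => isEmptyElim v⟩
  | inr h =>
  have hcard : Fintype.card (Sym t k) = t + 2 * k := by
    simp [Fintype.card_sum, Fintype.card_prod, mul_comm]
  have key : ∀ m : ℕ, ∃ c : V → Sym t k,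
      ∀ ⦃v w : V⦄, G.Adj v w → r v < m → r w < m → c v ≠ signAct (σ s(v, w)) (c w) := by
    intro m
    induction m with
    | zero =>
      have h1 : 0 < t + 2 * k := lt_of_le_of_lt (Nat.zero_le _) (hr (Classical.arbitrary V))
      have : Nonempty (Sym t k) := by rw [← Fintype.card_pos_iff, hcard]; exact h1
      exact ⟨fun _ => Classical.arbitrary _, fun v w _ hv => absurd hv (Nat.not_lt_zero _)⟩
    | succ m ih =>
      obtain ⟨c, hc⟩ := ih
      by_cases hv0 : ∃ v0, r v0 = m
      · obtain ⟨v0, hv0⟩ := hv0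
        set F := ((G.neighborFinset v0).filter (fun w => r w < r v0)).image
            (fun w => signAct (σ s(v0, w)) (c w)) with hF
        have hFcard : F.card < Fintype.card (Sym t k) := by
          rw [hcard]
          exact lt_of_le_of_lt Finset.card_image_le (hr v0)
        have hFc : Fᶜ.Nonempty := by
          rw [← Finset.card_pos, Finset.card_compl]
          omega
        obtain ⟨x, hx⟩ := hFc
        rw [Finset.mem_compl] at hx
        refine ⟨fun v => if v = v0 then x else c v, ?_⟩
        intro v w hadj hvm hwm
        have hne : v ≠ w := G.ne_of_adj hadj
        by_cases hv : v = v0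
        · have hw : w ≠ v0 := fun h' => hne (hv.trans h'.symm)
          simp only [if_pos hv, if_neg hw]
          have hwlt : r w < r v0 := by
            rw [hv0]
            rcases Nat.lt_succ_iff_lt_or_eq.mp hwm with h' | h'
            · exact h'
            · exact absurd (hinj (h'.trans hv0.symm)) hw
          rw [hv] at hadj
          intro hcontra
          rw [hv] at hcontra
          apply hx
          rw [hF]
          exact Finset.mem_image.mpr ⟨w, Finset.mem_filter.mpr
            ⟨(G.mem_neighborFinset _ _).mpr hadj, hwlt⟩, hcontra.symm⟩
        · by_cases hw : w = v0
          · simp only [if_pos hw, if_neg hv]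
            have hvlt : r v < r v0 := by
              rw [hv0]
              rcases Nat.lt_succ_iff_lt_or_eq.mp hvm with h' | h'
              · exact h'
              · exact absurd (hinj (h'.trans hv0.symm)) hv
            rw [hw] at hadj
            intro hcontra
            apply hx
            rw [hF]
            refine Finset.mem_image.mpr ⟨v, Finset.mem_filter.mpr
              ⟨(G.mem_neighborFinset _ _).mpr hadj.symm, hvlt⟩, ?_⟩
            rw [Sym2.eq_swap]
            rw [← hw, hcontra, signAct_invol]
          · simp only [if_neg hv, if_neg hw]
            have hvlt : r v < m := by
              rcases Nat.lt_succ_iff_lt_or_eq.mp hvm with h' | h'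
              · exact h'
              · exact absurd (hinj (h'.trans hv0.symm)) hv
            have hwlt : r w < m := by
              rcases Nat.lt_succ_iff_lt_or_eq.mp hwm with h' | h'
              · exact h'
              · exact absurd (hinj (h'.trans hv0.symm)) hw
            exact hc hadj hvlt hwlt
      · refine ⟨c, fun v w hadj hvm hwm => hc hadj ?_ ?_⟩
        · rcases Nat.lt_succ_iff_lt_or_eq.mp hvm with h' | h'
          · exact h'
          · exact absurd ⟨v, h'⟩ hv0
        · rcases Nat.lt_succ_iff_lt_or_eq.mp hwm with h' | h'
          · exact h'
          · exact absurd ⟨w, h'⟩ hv0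
  obtain ⟨c, hc⟩ := key (Finset.univ.sup r + 1)
  exact ⟨c, fun v w hadj => hc hadj
    (Nat.lt_succ_of_le (Finset.le_sup (Finset.mem_univ v)))
    (Nat.lt_succ_of_le (Finset.le_sup (Finset.mem_univ w)))⟩

lemma walk_pred (G : SimpleGraph V) (hconn : G.Connected) :
    ∀ {a v : V} (p : G.Walk a v), 0 < p.length →
      ∃ u, G.Adj u v ∧ G.dist a u + 1 ≤ p.length := by
  intro a v p
  induction p with
  | nil => intro h; simp at h
  | @cons a b v h q ih =>
    intro _
    cases q with
    | nil => exact ⟨a, h, by simp⟩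
    | @cons b' u' v' h' q' =>
      obtain ⟨u, hu, hle⟩ := ih (by simp)
      refine ⟨u, hu, ?_⟩
      have h1 : G.dist a b ≤ 1 := by
        have := SimpleGraph.dist_le (SimpleGraph.Walk.cons h SimpleGraph.Walk.nil)
        simpa using this
      have h2 := hconn.dist_triangle (u := a) (v := b) (w := u)
      simp only [SimpleGraph.Walk.length_cons] at *
      omega

lemma good_order (G : SimpleGraph V) [Fintype V] [DecidableRel G.Adj]
    (hconn : G.Connected) (hnreg : ¬ ∃ d, G.IsRegularOfDegree d) :
    ∃ r : V → ℕ, Function.Injective r ∧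
      ∀ v, ((G.neighborFinset v).filter (fun w => r w < r v)).card < G.maxDegree := by
  classical
  have hV : Nonempty V := hconn.nonempty
  have hnd : ¬ G.IsRegularOfDegree G.maxDegree := fun h => hnreg ⟨_, h⟩
  rw [SimpleGraph.IsRegularOfDegree] at hnd
  push_neg at hnd
  obtain ⟨v0, hv0⟩ := hnd
  have hv0lt : G.degree v0 < G.maxDegree := lt_of_le_of_ne (G.degree_le_maxDegree v0) hv0
  set M := Fintype.card V with hM
  have hdlt : ∀ v, G.dist v0 v < M := by
    intro v
    obtain ⟨p⟩ := hconn v0 v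
    exact lt_of_le_of_lt (SimpleGraph.dist_le p.bypass) p.bypass_isPath.length_lt
  set e : V → ℕ := fun v => (Fintype.equivFin V v : ℕ) with he
  have helt : ∀ v, e v < M := fun v => (Fintype.equivFin V v).isLt
  set r : V → ℕ := fun v => M * (M - G.dist v0 v) + e v with hrdef
  have hinj : Function.Injective r := by
    intro u v huv
    have h1 : e u % M = e v % M := by
      have := congrArg (· % M) huv
      simpa only [hrdef, Nat.mul_add_mod] using this
    rw [Nat.mod_eq_of_lt (helt u), Nat.mod_eq_of_lt (helt v)] at h1
    exact (Fintype.equivFin V).injective (Fin.ext h1)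
  have hmono : ∀ u v : V, G.dist v0 u < G.dist v0 v → r v < r u := by
    intro u v hd
    have h1 := hdlt v
    have h2 := helt v
    have h3 : M - G.dist v0 v + 1 ≤ M - G.dist v0 u := by omega
    have hrv : r v = M * (M - G.dist v0 v) + e v := rfl
    have hru : r u = M * (M - G.dist v0 u) + e u := rfl
    calc r v < M * (M - G.dist v0 v) + M := by omega
      _ = M * (M - G.dist v0 v + 1) := by ring
      _ ≤ M * (M - G.dist v0 u) := Nat.mul_le_mul_left M h3
      _ ≤ r u := by omega
  refine ⟨r, hinj, fun v => ?_⟩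
  by_cases hv : v = v0
  · rw [hv]
    calc ((G.neighborFinset v0).filter (fun w => r w < r v0)).card
        ≤ (G.neighborFinset v0).card := Finset.card_filter_le _ _
      _ = G.degree v0 := (G.card_neighborFinset_eq_degree v0)
      _ < G.maxDegree := hv0lt
  · have hdpos : 0 < G.dist v0 v := hconn.pos_dist_of_ne (fun h => hv h.symm)
    obtain ⟨p, hp⟩ := hconn.exists_walk_length_eq_dist v0 v
    obtain ⟨u, huadj, hule⟩ := walk_pred G hconn p (by omega)
    have hud : G.dist v0 u < G.dist v0 v := by omega
    have hru : r v < r u := hmono u v hud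
    have hsub : (G.neighborFinset v).filter (fun w => r w < r v) ⊆
        (G.neighborFinset v).erase u := by
      intro w hw
      rw [Finset.mem_filter] at hw
      refine Finset.mem_erase.mpr ⟨?_, hw.1⟩
      rintro rfl
      omega
    calc ((G.neighborFinset v).filter (fun w => r w < r v)).card
        ≤ ((G.neighborFinset v).erase u).card := Finset.card_le_card hsub
      _ = (G.neighborFinset v).card - 1 := Finset.card_erase_of_mem
          ((G.mem_neighborFinset _ _).mpr huadj.symm)
      _ < G.maxDegree := by
          have h1 : 0 < (G.neighborFinset v).card := Finset.card_pos.mpr ⟨u,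
            (G.mem_neighborFinset _ _).mpr huadj.symm⟩
          have h2 : (G.neighborFinset v).card ≤ G.maxDegree := by
            rw [G.card_neighborFinset_eq_degree]; exact G.degree_le_maxDegree v
          omega



/-- if `(G, σ)` is a simple connected signed graph, `G` is not
regular and `t ∈ {0, …, χ(G)}`, then `χ^t_sym(G,σ) ≤ Δ(G) + 1` when
`Δ(G) - t` is odd, and `χ^t_sym(G,σ) ≤ Δ(G)` when `Δ(G) - t` is even. -/
theorem stmt9 {V : Type*} [Fintype V] (G : SimpleGraph V) [DecidableRel G.Adj]
    (σ : Sym2 V → Bool) (hconn : G.Connected)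
    (hnreg : ¬ ∃ d, G.IsRegularOfDegree d) (t : ℕ) (ht : t ≤ chrom G) :
    (Odd ((G.maxDegree : ℤ) - t) → symChromT G σ t ≤ G.maxDegree + 1) ∧
    (Even ((G.maxDegree : ℤ) - t) → symChromT G σ t ≤ G.maxDegree) := by
  classical
  obtain ⟨r, hinj, hlt⟩ := good_order G hconn hnreg
  obtain ⟨c, hc⟩ := greedy G (fun _ => true) (t := G.maxDegree) (k := 0) r hinj
      (fun v => by simpa using hlt v)
  have hcol : G.Colorable G.maxDegree := by
    have hC : G.Colorable (Fintype.card (Sym G.maxDegree 0)) :=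
      (SimpleGraph.Coloring.mk c
        (fun {v w} h hvw => hc h (by simp [signAct, hvw]))).colorable
    simpa using hC
  have hchrom : chrom G ≤ G.maxDegree := by
    have h1 := hcol.chromaticNumber_le
    have h2 : G.chromaticNumber ≠ ⊤ := fun h => by simp [h] at h1
    rw [show chrom G = G.chromaticNumber.toNat from rfl]
    rw [← ENat.coe_toNat h2] at h1
    exact_mod_cast h1
  have htle : t ≤ G.maxDegree := ht.trans hchrom
  constructor
  · intro hodd
    obtain ⟨m, hm⟩ := hodd
    refine Nat.sInf_le ⟨(G.maxDegree + 1 - t) / 2, by omega, ?_⟩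
    exact greedy G σ r hinj (fun v => by have := hlt v; omega)
  · intro heven
    obtain ⟨m, hm⟩ := heven
    refine Nat.sInf_le ⟨(G.maxDegree - t) / 2, by omega, ?_⟩
    exact greedy G σ r hinj (fun v => by have := hlt v; omega)

end SymSet
end

section
/- Let G be a graph and t an integer with 0 ≤ t ≤ χ(G) − 1. Then the minimum of the symset t-chromatic spectrum of G equals t + 2, i.e. m_{χ^t_sym}(G) = t + 2. -/
namespace SymSet

/-- No proper `S_0^t`-coloring when `t < χ(G)`. -/
lemma not_colorable_zero {V : Type*} (G : SimpleGraph V) (t : ℕ)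
    (ht : t < chrom G) (σ : Sym2 V → Bool) : ¬ SymColorable G σ t 0 := by
  rintro ⟨c, hc⟩
  have hout : ∀ v, ∃ i : Fin t, c v = Sum.inl i := by
    intro v
    rcases h : c v with i | ⟨i, b⟩
    · exact ⟨i, rfl⟩
    · exact absurd i.2 (by simp)
  choose f hf using hout
  have hcol : G.Colorable t := by
    refine ⟨SimpleGraph.Coloring.mk f ?_⟩
    intro v w hvw hfvw
    apply hc hvw
    rw [hf v, hf w, signAct_inl, hfvw]
  have hle : G.chromaticNumber ≤ (t : ℕ∞) := hcol.chromaticNumber_le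
  have : chrom G ≤ t := by
    have := ENat.toNat_le_toNat hle (by simp)
    simpa [chrom] using this
  omega

/-- For any σ, the defining set of `symChromT` is nonempty (use `k = |V|`). -/
lemma colorable_set_nonempty {V : Type*} [Fintype V] (G : SimpleGraph V)
    (t : ℕ) (σ : Sym2 V → Bool) :
    {n | ∃ k, n = t + 2 * k ∧ SymColorable G σ t k}.Nonempty := by
  refine ⟨t + 2 * Fintype.card V, Fintype.card V, rfl, ?_⟩
  refine ⟨fun v => Sum.inr ((Fintype.equivFin V) v, true), ?_⟩
  intro v w hvw
  cases h : σ s(v, w) <;> simp [signAct, symNeg, h, hvw.ne,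
    (Fintype.equivFin V).injective.ne hvw.ne]

/-- For any σ, `symChromT ≥ t + 2` when `t < χ(G)`. -/
lemma symChromT_lower {V : Type*} [Fintype V] (G : SimpleGraph V) (t : ℕ)
    (ht : t < chrom G) (σ : Sym2 V → Bool) : t + 2 ≤ symChromT G σ t := by
  obtain ⟨k, hk, hcol⟩ := Nat.sInf_mem (colorable_set_nonempty G t σ)
  have hk0 : k ≠ 0 := by
    rintro rfl
    exact not_colorable_zero G t ht σ hcol
  unfold symChromT
  omega

/-- for `0 ≤ t ≤ χ(G) - 1`, the minimum of the symset
`t`-chromatic spectrum of `G` is `t + 2`. -/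
theorem stmt11 {V : Type*} [Fintype V] (G : SimpleGraph V) (t : ℕ)
    (ht : t < chrom G) :
    IsLeast {n | ∃ σ : Sym2 V → Bool, symChromT G σ t = n} (t + 2) := by
  constructor
  · refine ⟨fun _ => false, le_antisymm ?_ (symChromT_lower G t ht _)⟩
    apply Nat.sInf_le
    refine ⟨1, by ring, fun _ => Sum.inr (0, true), ?_⟩
    intro v w hvw
    simp [signAct, symNeg]
  · rintro n ⟨σ, rfl⟩
    exact symChromT_lower G t ht σ

end SymSet
end

section
/- Let G be a graph and t an integer with 0 ≤ t ≤ χ(G) − 1. Then the symset t-chromatic spectrum of G is exactly the arithmetic progression Σ_{χ^t_sym}(G) = {t+2, t+4, …, M_{χ^t_sym}(G)}, i.e. it contains every value of the same parity as t between t+2 and its maximum M_{χ^t_sym}(G). -/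
namespace SymSet

section Aux

variable {V : Type*}

/-- Embedding of `S_{2k}^t` into `S_{2(k+1)}^t`. -/
def symEmb {t k : ℕ} : Sym t k → Sym t (k + 1)
  | .inl i => .inl i
  | .inr (i, b) => .inr (i.castSucc, b)

lemma symEmb_injective {t k : ℕ} : Function.Injective (symEmb (t := t) (k := k)) := by
  rintro (i | ⟨i, b⟩) (j | ⟨j, c⟩) h <;>
    simp [symEmb, Fin.castSucc_inj] at h <;> simp_all

lemma signAct_symEmb {t k : ℕ} (s : Bool) (x : Sym t k) :
    signAct s (symEmb x) = symEmb (signAct s x) := by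
  rcases x with i | ⟨i, b⟩ <;> cases s <;> simp [signAct, symNeg, symEmb]

lemma symEmb_ne_last {t k : ℕ} (x : Sym t k) (b : Bool) :
    symEmb x ≠ Sum.inr (Fin.last k, b) := by
  rcases x with i | ⟨i, c⟩ <;> simp [symEmb]

lemma colorable_succ {G : SimpleGraph V} {σ : Sym2 V → Bool} {t k : ℕ}
    (h : SymColorable G σ t k) : SymColorable G σ t (k + 1) := by
  obtain ⟨c, hc⟩ := h
  refine ⟨fun v => symEmb (c v), fun v w hvw heq => ?_⟩
  rw [signAct_symEmb] at heq
  exact hc hvw (symEmb_injective heq)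

lemma colorable_card [Fintype V] (G : SimpleGraph V) (σ : Sym2 V → Bool) (t : ℕ) :
    SymColorable G σ t (Fintype.card V) := by
  classical
  refine ⟨fun v => Sum.inr (Fintype.equivFin V v, true), fun v w hvw heq => ?_⟩
  have hne : v ≠ w := hvw.ne
  cases s : σ s(v, w) <;> simp [signAct, symNeg, s] at heq <;> exact hne heq

/-- The least `k` for which `(G, σ)` is `S_{2k}^t`-colorable. -/
noncomputable def minK (G : SimpleGraph V) (σ : Sym2 V → Bool) (t : ℕ) : ℕ :=
  sInf {k | SymColorable G σ t k}

lemma minK_colorable [Fintype V] (G : SimpleGraph V) (σ : Sym2 V → Bool) (t : ℕ) :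
    SymColorable G σ t (minK G σ t) := by
  have h : Fintype.card V ∈ {k | SymColorable G σ t k} := colorable_card G σ t
  exact Nat.sInf_mem ⟨_, h⟩

lemma minK_le_card [Fintype V] (G : SimpleGraph V) (σ : Sym2 V → Bool) (t : ℕ) :
    minK G σ t ≤ Fintype.card V :=
  Nat.sInf_le (colorable_card G σ t)

lemma symChromT_eq [Fintype V] (G : SimpleGraph V) (σ : Sym2 V → Bool) (t : ℕ) :
    symChromT G σ t = t + 2 * minK G σ t := by
  have hne : SymColorable G σ t (minK G σ t) := minK_colorable G σ t
  refine le_antisymm (Nat.sInf_le ⟨minK G σ t, rfl, hne⟩) ?_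
  have hmem : symChromT G σ t ∈ {n | ∃ k, n = t + 2 * k ∧ SymColorable G σ t k} :=
    Nat.sInf_mem ⟨t + 2 * minK G σ t, minK G σ t, rfl, hne⟩
  obtain ⟨k, hk, hcol⟩ := hmem
  have : minK G σ t ≤ k := Nat.sInf_le hcol
  omega

lemma minK_pos [Fintype V] {G : SimpleGraph V} {t : ℕ} (ht : t < chrom G)
    (σ : Sym2 V → Bool) : 1 ≤ minK G σ t := by
  by_contra h
  have h0 : minK G σ t = 0 := by omega
  have hcol : SymColorable G σ t 0 := h0 ▸ minK_colorable G σ t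
  obtain ⟨c, hc⟩ := hcol
  have hall : ∀ v, ∃ i : Fin t, c v = Sum.inl i := by
    intro v
    rcases hv : c v with i | ⟨i, b⟩
    · exact ⟨i, rfl⟩
    · exact Fin.elim0 i
  choose d hd using hall
  have hcolor : G.Colorable t := by
    refine ⟨SimpleGraph.Coloring.mk d fun {v w} hvw heq => ?_⟩
    apply hc hvw
    rw [hd v, hd w, heq]
    cases s : σ s(v, w) <;> simp [signAct, symNeg]
  have hle : G.chromaticNumber ≤ (t : ℕ∞) := hcolor.chromaticNumber_le
  have : chrom G ≤ t := by
    have := ENat.toNat_le_toNat hle (by simp)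
    simpa [chrom] using this
  omega

lemma colorable_update [DecidableEq V] [DecidableEq (Sym2 V)]
    {G : SimpleGraph V} {σ : Sym2 V → Bool} {t k : ℕ}
    (e0 : Sym2 V) (b : Bool) (h : SymColorable G σ t k) :
    SymColorable G (Function.update σ e0 b) t (k + 1) := by
  induction e0 using Sym2.ind with
  | _ u0 v0 =>
    obtain ⟨c, hc⟩ := h
    refine ⟨fun v => if v = u0 then Sum.inr (Fin.last k, true) else symEmb (c v),
      fun v w hvw heq => ?_⟩
    have hne : v ≠ w := hvw.ne
    dsimp only at heq
    by_cases hv : v = u0 <;> by_cases hw : w = u0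
    · exact hne (hv.trans hw.symm)
    · rw [if_pos hv, if_neg hw, signAct_symEmb] at heq
      exact symEmb_ne_last _ _ heq.symm
    · rw [if_neg hv, if_pos hw] at heq
      rcases s' : Function.update σ s(u0, v0) b s(v, w) with _ | _ <;>
        rw [s'] at heq <;> simp [signAct, symNeg] at heq <;>
        exact symEmb_ne_last _ _ heq
    · rw [if_neg hv, if_neg hw] at heq
      have hedge : s(v, w) ≠ s(u0, v0) := by
        intro hcon
        rcases Sym2.eq_iff.mp hcon with ⟨rfl, rfl⟩ | ⟨rfl, rfl⟩
        · exact hv rfl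
        · exact hw rfl
      rw [Function.update_of_ne hedge, signAct_symEmb] at heq
      exact hc hvw (symEmb_injective heq)

lemma minK_update_le [Fintype V] [DecidableEq V] [DecidableEq (Sym2 V)]
    (G : SimpleGraph V) (σ : Sym2 V → Bool) (t : ℕ) (e0 : Sym2 V) (b : Bool) :
    minK G (Function.update σ e0 b) t ≤ minK G σ t + 1 :=
  Nat.sInf_le (colorable_update e0 b (minK_colorable G σ t))

lemma minK_update_ge [Fintype V] [DecidableEq V] [DecidableEq (Sym2 V)]
    (G : SimpleGraph V) (σ : Sym2 V → Bool) (t : ℕ) (e0 : Sym2 V) (b : Bool) :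
    minK G σ t ≤ minK G (Function.update σ e0 b) t + 1 := by
  have h := minK_update_le G (Function.update σ e0 b) t e0 (σ e0)
  rwa [Function.update_idem, Function.update_eq_self] at h

/-- Interpolating signature between `σ₀` and `σ₁` along a list of edges. -/
def blend [DecidableEq (Sym2 V)] (σ₀ σ₁ : Sym2 V → Bool) (L : List (Sym2 V)) :
    Sym2 V → Bool :=
  fun e => if e ∈ L then σ₁ e else σ₀ e

lemma blend_nil [DecidableEq (Sym2 V)] (σ₀ σ₁ : Sym2 V → Bool) :
    blend σ₀ σ₁ [] = σ₀ := by
  funext e; simp [blend]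

lemma blend_cons [DecidableEq (Sym2 V)] (σ₀ σ₁ : Sym2 V → Bool) (e : Sym2 V)
    (L : List (Sym2 V)) :
    blend σ₀ σ₁ (e :: L) = Function.update (blend σ₀ σ₁ L) e (σ₁ e) := by
  funext e'
  by_cases h : e' = e
  · subst h; simp [blend, Function.update]
  · rw [Function.update_of_ne h]
    simp [blend, h]

lemma ivt [Fintype V] [DecidableEq V] [DecidableEq (Sym2 V)]
    (G : SimpleGraph V) (t : ℕ) (σ₀ σ₁ : Sym2 V → Bool) (L : List (Sym2 V)) (m : ℕ)
    (h1 : min (minK G σ₀ t) (minK G (blend σ₀ σ₁ L) t) ≤ m)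
    (h2 : m ≤ max (minK G σ₀ t) (minK G (blend σ₀ σ₁ L) t)) :
    ∃ σ : Sym2 V → Bool, minK G σ t = m := by
  induction L with
  | nil =>
    rw [blend_nil] at h1 h2
    exact ⟨σ₀, by omega⟩
  | cons e L ih =>
    rw [blend_cons] at h1 h2
    have step1 : minK G (Function.update (blend σ₀ σ₁ L) e (σ₁ e)) t ≤
        minK G (blend σ₀ σ₁ L) t + 1 := minK_update_le G _ t e _
    have step2 : minK G (blend σ₀ σ₁ L) t ≤
        minK G (Function.update (blend σ₀ σ₁ L) e (σ₁ e)) t + 1 := minK_update_ge G _ t e _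
    by_cases hm : min (minK G σ₀ t) (minK G (blend σ₀ σ₁ L) t) ≤ m ∧
        m ≤ max (minK G σ₀ t) (minK G (blend σ₀ σ₁ L) t)
    · exact ih hm.1 hm.2
    · exact ⟨Function.update (blend σ₀ σ₁ L) e (σ₁ e), by omega⟩

end Aux

/-- for `0 ≤ t ≤ χ(G) - 1`, the symset `t`-chromatic spectrum
of `G` is exactly the arithmetic progression
`{t+2, t+4, …, M_{χ^t_sym}(G)}`: it consists of all integers of the same parity
as `t` between `t + 2` and its maximum. -/
theorem stmt14 {V : Type*} [Fintype V] (G : SimpleGraph V) (t : ℕ)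
    (ht : t < chrom G) :
    {n | ∃ σ : Sym2 V → Bool, symChromT G σ t = n} =
      {n | t + 2 ≤ n ∧ n ≤ sSup {m | ∃ σ : Sym2 V → Bool, symChromT G σ t = m} ∧
        n % 2 = t % 2} := by
  classical
  have hbdd : BddAbove {m | ∃ σ : Sym2 V → Bool, symChromT G σ t = m} := by
    refine ⟨t + 2 * Fintype.card V, ?_⟩
    rintro m ⟨σ, rfl⟩
    rw [symChromT_eq]
    have := minK_le_card G σ t
    omega
  ext n
  simp only [Set.mem_setOf_eq]
  constructor
  · rintro ⟨σ, rfl⟩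
    refine ⟨?_, le_csSup hbdd ⟨σ, rfl⟩, ?_⟩ <;>
    · rw [symChromT_eq]
      have := minK_pos ht σ
      omega
  · rintro ⟨h1, h2, h3⟩
    -- the maximum is attained
    have hnonempty : {m | ∃ σ : Sym2 V → Bool, symChromT G σ t = m}.Nonempty :=
      ⟨symChromT G (fun _ => false) t, fun _ => false, rfl⟩
    obtain ⟨σM, hM⟩ := Nat.sSup_mem hnonempty hbdd
    -- the all-negative signature attains `t + 2`
    have hmin : minK G (fun _ => false) t = 1 := by
      refine le_antisymm (Nat.sInf_le ?_) (minK_pos ht _)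
      refine ⟨fun _ => Sum.inr ((0 : Fin 1), true), fun v w hvw heq => ?_⟩
      simp [signAct, symNeg] at heq
    set k := (n - t) / 2 with hk
    have hkeq : n = t + 2 * k ∧ 1 ≤ k := by omega
    rw [symChromT_eq] at hM
    have hkM : k ≤ minK G σM t := by omega
    have := ivt G t (fun _ => false) σM (Finset.univ : Finset (Sym2 V)).toList k
    rw [show blend (fun _ => false) σM (Finset.univ : Finset (Sym2 V)).toList = σM by
      funext e; simp [blend], hmin] at this
    obtain ⟨σ, hσ⟩ := this (by omega) (by omega)
    exact ⟨σ, by rw [symChromT_eq, hσ]; omega⟩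

end SymSet
end
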